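/- The polynomial t^2 - t + 1 is the unique degree-2 Alexander polynomial having a root which is a root of unity. Precisely: if p(t) = a t^2 + b t + a is a degree-2 integer polynomial with p(1) = ±1 (so 2a + b = ±1) and some root of p is a root of unity, then p(t) = ±(t^2 - t + 1). -/

import Mathlib

/-- If `p(t) = a t² + b t + a` is a degree-2 integer polynomial with `p(1) = ±1`
(i.e. `2a + b = ±1`) having a root that is a root of unity, then
`p(t) = ±(t² - t + 1)`. -/
theorem alexander_deg_two_root_of_unity (a b : ℤ) (ha : a ≠ 0)
    (h1 : 2 * a + b = 1 ∨ 2 * a + b = -1)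
    (hroot : ∃ (z : ℂ) (n : ℕ), 0 < n ∧ z ^ n = 1 ∧
      (a : ℂ) * z ^ 2 + (b : ℂ) * z + (a : ℂ) = 0) :
    (a = 1 ∧ b = -1) ∨ (a = -1 ∧ b = 1) := by
  obtain ⟨z, n, hn, hzn, heq⟩ := hroot
  have hz0 : z ≠ 0 := by
    intro h; rw [h, zero_pow hn.ne'] at hzn; exact one_ne_zero hzn.symm
  have habs : ‖z‖ = 1 := Complex.norm_eq_one_of_pow_eq_one hzn hn.ne'
  -- z⁻¹ = z ^ (n-1)
  have hinv : z⁻¹ = z ^ (n - 1) := by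
    have : z * z ^ (n - 1) = 1 := by
      rw [← pow_succ']
      rwa [Nat.sub_add_cancel hn]
    field_simp
    linear_combination -this
  -- the key relation: a * (z + z⁻¹) + b = 0
  have hw : (a : ℂ) * (z + z⁻¹) + b = 0 := by
    have h2 : ((a : ℂ) * z ^ 2 + b * z + a) * z⁻¹ = 0 := by rw [heq]; ring
    field_simp at h2 ⊢
    linear_combination h2
  -- w is integral over ℤ
  have hzint : IsIntegral ℤ z :=
    ⟨Polynomial.X ^ n - Polynomial.C 1, Polynomial.monic_X_pow_sub_C 1 hn.ne', by
      simp [hzn]⟩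
  have hwint : IsIntegral ℤ (z + z⁻¹) := by
    rw [hinv]; exact hzint.add (hzint.pow _)
  -- w equals the rational number -b/a
  have hq : z + z⁻¹ = (algebraMap ℚ ℂ) ((-b : ℚ) / a) := by
    have ha' : (a : ℂ) ≠ 0 := Int.cast_ne_zero.mpr ha
    have haq : (a : ℚ) ≠ 0 := Int.cast_ne_zero.mpr ha
    rw [map_div₀, map_neg, map_intCast, map_intCast, eq_div_iff ha']
    linear_combination hw
  -- descend integrality to ℚ, get an integer m
  have hqint : IsIntegral ℤ ((-b : ℚ) / a) := by
    have := hwint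
    rw [hq] at this
    exact (isIntegral_algebraMap_iff (algebraMap ℚ ℂ).injective).mp this
  obtain ⟨m, hm⟩ := IsIntegrallyClosed.isIntegral_iff.mp hqint
  have haq : (a : ℚ) ≠ 0 := Int.cast_ne_zero.mpr ha
  have hab : a * m = -b := by
    have : (m : ℚ) = (-b : ℚ) / a := hm
    rw [eq_div_iff haq] at this
    exact_mod_cast (by linarith [this] : (a : ℚ) * m = -b)
  -- bound |m| ≤ 2
  have hmb : (m : ℝ) ≤ 2 ∧ -2 ≤ (m : ℝ) := by
    have h2 : ‖z + z⁻¹‖ ≤ 2 := by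
      calc ‖z + z⁻¹‖ ≤ ‖z‖ + ‖z⁻¹‖ :=
            norm_add_le _ _
        _ = 2 := by rw [norm_inv, habs]; norm_num
    have hwm : z + z⁻¹ = (m : ℂ) := by
      rw [hq, ← hm]; simp
    rw [hwm] at h2
    rw [Complex.norm_intCast] at h2
    constructor <;> [exact le_trans (le_abs_self _) h2;
      exact neg_le_of_abs_le h2]
  have hm2 : -2 ≤ m ∧ m ≤ 2 :=
    ⟨by exact_mod_cast hmb.2, by exact_mod_cast hmb.1⟩
  -- finish: a * (2 - m) = ±1
  obtain ⟨hl, hr⟩ := hm2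
  interval_cases m <;> omega
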